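/- Let v ∈ ℝ^S and let π be a policy that is greedy for v, i.e. L_π v = L v. Then the robust value function v_π (the unique fixed point of L_π) satisfies ‖v* − v_π‖∞ ≤ (2/(1−γ)) ‖L v − v‖∞, where v* is the unique fixed point of L. -/

import Mathlib

open Finset

/-- Weighted average bound for simplex weights. -/
lemma simplex_weight_le' {A : Type*} [Fintype A] {d : A → ℝ} (hd : d ∈ stdSimplex ℝ A)
    {x : A → ℝ} {C : ℝ} (hx : ∀ a, x a ≤ C) : ∑ a, d a * x a ≤ C := by
  calc ∑ a, d a * x a ≤ ∑ a, d a * C :=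
        Finset.sum_le_sum fun a _ => mul_le_mul_of_nonneg_left (hx a) (hd.1 a)
    _ = C := by rw [← Finset.sum_mul, hd.2, one_mul]

lemma inner_diff_bound' {S A : Type*} [Fintype S] [Fintype A] {γ : ℝ} (hγ0 : 0 ≤ γ)
    (r : S → A → S → ℝ) (s : S)
    {d : A → ℝ} (hd : d ∈ stdSimplex ℝ A) {p : A → S → ℝ} (hp : ∀ a, p a ∈ stdSimplex ℝ S)
    (u w : S → ℝ) :
    (∑ a, d a * ∑ s', p a s' * (r s a s' + γ * u s'))
      ≤ (∑ a, d a * ∑ s', p a s' * (r s a s' + γ * w s')) + γ * ‖u - w‖ := by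
  have key : ∀ a, ∑ s', p a s' * (r s a s' + γ * u s')
      ≤ (∑ s', p a s' * (r s a s' + γ * w s')) + γ * ‖u - w‖ := by
    intro a
    have heq : ∑ s', p a s' * (r s a s' + γ * u s') - ∑ s', p a s' * (r s a s' + γ * w s')
        = ∑ s', p a s' * (γ * (u s' - w s')) := by
      rw [← Finset.sum_sub_distrib]
      exact Finset.sum_congr rfl fun s' _ => by ring
    have hb : ∑ s', p a s' * (γ * (u s' - w s')) ≤ γ * ‖u - w‖ := by
      refine simplex_weight_le' (hp a) fun s' => ?_
      have h1 : |u s' - w s'| ≤ ‖u - w‖ := by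
        simpa [Real.norm_eq_abs] using norm_le_pi_norm (u - w) s'
      calc γ * (u s' - w s') ≤ γ * |u s' - w s'| :=
            mul_le_mul_of_nonneg_left (le_abs_self _) hγ0
        _ ≤ γ * ‖u - w‖ := mul_le_mul_of_nonneg_left h1 hγ0
    linarith
  calc ∑ a, d a * ∑ s', p a s' * (r s a s' + γ * u s')
      ≤ ∑ a, d a * ((∑ s', p a s' * (r s a s' + γ * w s')) + γ * ‖u - w‖) :=
        Finset.sum_le_sum fun a _ => mul_le_mul_of_nonneg_left (key a) (hd.1 a)
    _ = (∑ a, d a * ∑ s', p a s' * (r s a s' + γ * w s')) + γ * ‖u - w‖ := by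
        simp only [mul_add, Finset.sum_add_distrib, ← Finset.sum_mul, hd.2, one_mul]

section main

variable {S A : Type*} [Fintype S] [Nonempty S] [Fintype A] [Nonempty A]

lemma cont_aux (γ : ℝ) (r : S → A → S → ℝ) (s : S) (d : A → ℝ) (x : S → ℝ) :
    Continuous (fun p : A → S → ℝ =>
      ∑ a, d a * ∑ s', p a s' * (r s a s' + γ * x s')) := by
  apply continuous_finset_sum
  intro a _
  apply Continuous.mul continuous_const
  apply continuous_finset_sum
  intro s' _
  exact (continuous_apply_apply a s').mul continuous_const

/-- sInf over the ambiguity set moves by at most γ‖u−w‖. -/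
lemma sInf_step (γ : ℝ) (hγ0 : 0 ≤ γ) (r : S → A → S → ℝ)
    (P : S → Set (A → S → ℝ)) (hPne : ∀ s, (P s).Nonempty)
    (hPcompact : ∀ s, IsCompact (P s))
    (hPsub : ∀ s, ∀ p ∈ P s, ∀ a, p a ∈ stdSimplex ℝ S)
    (s : S) {d : A → ℝ} (hd : d ∈ stdSimplex ℝ A) (u w : S → ℝ) :
    sInf ((fun p : A → S → ℝ =>
        ∑ a, d a * ∑ s', p a s' * (r s a s' + γ * u s')) '' P s)
      ≤ sInf ((fun p : A → S → ℝ =>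
        ∑ a, d a * ∑ s', p a s' * (r s a s' + γ * w s')) '' P s) + γ * ‖u - w‖ := by
  set g := fun p : A → S → ℝ => ∑ a, d a * ∑ s', p a s' * (r s a s' + γ * u s') with hg
  set h := fun p : A → S → ℝ => ∑ a, d a * ∑ s', p a s' * (r s a s' + γ * w s') with hh
  have bddg : BddBelow (g '' P s) := ((hPcompact s).image (cont_aux γ r s d u)).bddBelow
  have hne : (h '' P s).Nonempty := (hPne s).image _
  have key : sInf (g '' P s) - γ * ‖u - w‖ ≤ sInf (h '' P s) := by
    apply le_csInf hne
    rintro b ⟨p, hp, rfl⟩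
    have h1 : sInf (g '' P s) ≤ g p := csInf_le bddg ⟨p, hp, rfl⟩
    have h2 : g p ≤ h p + γ * ‖u - w‖ :=
      inner_diff_bound' hγ0 r s hd (hPsub s p hp) u w
    linarith
  linarith

/-- uniform upper bound on the inner value. -/
lemma value_ub (γ : ℝ) (r : S → A → S → ℝ) (s : S)
    {d : A → ℝ} (hd : d ∈ stdSimplex ℝ A) {p : A → S → ℝ} (hp : ∀ a, p a ∈ stdSimplex ℝ S)
    (x : S → ℝ) :
    ∑ a, d a * ∑ s', p a s' * (r s a s' + γ * x s')
      ≤ Finset.univ.sup' Finset.univ_nonempty (fun a : A =>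
          Finset.univ.sup' Finset.univ_nonempty (fun s' : S => r s a s' + γ * x s')) := by
  refine simplex_weight_le' hd fun a => ?_
  have h1 : ∑ s', p a s' * (r s a s' + γ * x s')
      ≤ Finset.univ.sup' Finset.univ_nonempty (fun s' : S => r s a s' + γ * x s') :=
    simplex_weight_le' (hp a) fun s' =>
      Finset.le_sup' (fun s' : S => r s a s' + γ * x s') (Finset.mem_univ s')
  exact h1.trans (Finset.le_sup'
    (fun a : A => Finset.univ.sup' Finset.univ_nonempty fun s' : S => r s a s' + γ * x s')
    (Finset.mem_univ a))

lemma stdSimplex_nonempty' : (stdSimplex ℝ A).Nonempty := by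
  classical
  refine ⟨fun a => if a = Classical.arbitrary A then 1 else 0, fun a => ?_, ?_⟩
  · dsimp only; split <;> norm_num
  · simp

end main

/-- Generic fixed point distance bound. -/
lemma fp_bound {S : Type*} [Fintype S] [Nonempty S] {γ : ℝ} (hγ0 : 0 ≤ γ) (hγ1 : γ < 1)
    {T : (S → ℝ) → (S → ℝ)} (hcontr : ∀ u w, ‖T u - T w‖ ≤ γ * ‖u - w‖)
    {fp : S → ℝ} (hfp : T fp = fp) (v : S → ℝ) :
    ‖fp - v‖ ≤ ‖T v - v‖ / (1 - γ) := by
  have h1 : ‖fp - v‖ ≤ ‖fp - T v‖ + ‖T v - v‖ := by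
    have := norm_add_le (fp - T v) (T v - v)
    simpa using this
  have h2 : ‖fp - T v‖ ≤ γ * ‖fp - v‖ := by
    calc ‖fp - T v‖ = ‖T fp - T v‖ := by rw [hfp]
      _ ≤ γ * ‖fp - v‖ := hcontr fp v
  have h3 : (1 - γ) * ‖fp - v‖ ≤ ‖T v - v‖ := by nlinarith
  rw [le_div_iff₀ (by linarith : (0:ℝ) < 1 - γ)]
  linarith

lemma contraction_of_pointwise {S : Type*} [Fintype S] [Nonempty S] {γ : ℝ} (hγ0 : 0 ≤ γ)
    {T : (S → ℝ) → (S → ℝ)} (h : ∀ u w s, T u s ≤ T w s + γ * ‖u - w‖) (u w : S → ℝ) :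
    ‖T u - T w‖ ≤ γ * ‖u - w‖ := by
  rw [pi_norm_le_iff_of_nonneg (by positivity)]
  intro s
  rw [Real.norm_eq_abs, abs_le]
  have h1 := h u w s
  have h2 := h w u s
  have h3 : ‖w - u‖ = ‖u - w‖ := norm_sub_rev _ _
  rw [h3] at h2
  constructor <;> simp only [Pi.sub_apply] <;> linarith

/-- If π is greedy for `v` (i.e. `Lpi v = L v`), then the robust value
function `vpi` of π satisfies `‖vstar − vpi‖∞ ≤ (2/(1−γ)) ‖L v − v‖∞`. -/
theorem greedy_policy_optimality_gap_bound
    {S A : Type*} [Fintype S] [Nonempty S] [Fintype A] [Nonempty A]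
    (γ : ℝ) (hγ0 : 0 < γ) (hγ1 : γ < 1)
    (r : S → A → S → ℝ)
    (P : S → Set (A → S → ℝ))
    (hPne : ∀ s, (P s).Nonempty)
    (hPcompact : ∀ s, IsCompact (P s))
    (hPsub : ∀ s, ∀ p ∈ P s, ∀ a, p a ∈ stdSimplex ℝ S)
    (π : S → A → ℝ) (hπ : ∀ s, π s ∈ stdSimplex ℝ A)
    (Lpi : (S → ℝ) → (S → ℝ))
    (hLpi : ∀ v s, Lpi v s =
      sInf ((fun p : A → S → ℝ =>
        ∑ a, π s a * ∑ s', p a s' * (r s a s' + γ * v s')) '' P s))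
    (L : (S → ℝ) → (S → ℝ))
    (hL : ∀ v s, L v s =
      sSup ((fun d : A → ℝ =>
        sInf ((fun p : A → S → ℝ =>
          ∑ a, d a * ∑ s', p a s' * (r s a s' + γ * v s')) '' P s)) '' stdSimplex ℝ A))
    (v : S → ℝ) (hgreedy : Lpi v = L v)
    (vpi : S → ℝ) (hvpi : Lpi vpi = vpi)
    (vstar : S → ℝ) (hvstar : L vstar = vstar) :
    ‖vstar - vpi‖ ≤ (2 / (1 - γ)) * ‖L v - v‖ := by
  have hγ0' : (0:ℝ) ≤ γ := le_of_lt hγ0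
  -- pointwise step for Lpi
  have hLpi_pt : ∀ u w s, Lpi u s ≤ Lpi w s + γ * ‖u - w‖ := by
    intro u w s
    rw [hLpi, hLpi]
    exact sInf_step γ hγ0' r P hPne hPcompact hPsub s (hπ s) u w
  -- pointwise step for L
  have hL_pt : ∀ u w s, L u s ≤ L w s + γ * ‖u - w‖ := by
    intro u w s
    rw [hL, hL]
    set Fu := fun d : A → ℝ => sInf ((fun p : A → S → ℝ =>
        ∑ a, d a * ∑ s', p a s' * (r s a s' + γ * u s')) '' P s) with hFu
    set Fw := fun d : A → ℝ => sInf ((fun p : A → S → ℝ =>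
        ∑ a, d a * ∑ s', p a s' * (r s a s' + γ * w s')) '' P s) with hFw
    obtain ⟨p0, hp0⟩ := hPne s
    have bddw : BddAbove (Fw '' stdSimplex ℝ A) := by
      refine ⟨Finset.univ.sup' Finset.univ_nonempty (fun a : A =>
          Finset.univ.sup' Finset.univ_nonempty (fun s' : S => r s a s' + γ * w s')), ?_⟩
      rintro b ⟨d, hd, rfl⟩
      have bdd : BddBelow ((fun p : A → S → ℝ =>
          ∑ a, d a * ∑ s', p a s' * (r s a s' + γ * w s')) '' P s) :=
        ((hPcompact s).image (cont_aux γ r s d w)).bddBelow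
      refine le_trans (csInf_le bdd ⟨p0, hp0, rfl⟩) ?_
      exact value_ub γ r s hd (hPsub s p0 hp0) w
    apply csSup_le (stdSimplex_nonempty'.image _)
    rintro b ⟨d, hd, rfl⟩
    have h1 : Fu d ≤ Fw d + γ * ‖u - w‖ :=
      sInf_step γ hγ0' r P hPne hPcompact hPsub s hd u w
    have h2 : Fw d ≤ sSup (Fw '' stdSimplex ℝ A) := le_csSup bddw ⟨d, hd, rfl⟩
    linarith
  have hLpiC := contraction_of_pointwise hγ0' hLpi_pt
  have hLC := contraction_of_pointwise hγ0' hL_pt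
  have b1 : ‖vstar - v‖ ≤ ‖L v - v‖ / (1 - γ) := fp_bound hγ0' hγ1 hLC hvstar v
  have b2 : ‖vpi - v‖ ≤ ‖Lpi v - v‖ / (1 - γ) := fp_bound hγ0' hγ1 hLpiC hvpi v
  rw [hgreedy] at b2
  have tri : ‖vstar - vpi‖ ≤ ‖vstar - v‖ + ‖vpi - v‖ := by
    have := norm_add_le (vstar - v) (v - vpi)
    have h4 : ‖v - vpi‖ = ‖vpi - v‖ := norm_sub_rev _ _
    calc ‖vstar - vpi‖ = ‖(vstar - v) + (v - vpi)‖ := by ring_nf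
      _ ≤ ‖vstar - v‖ + ‖v - vpi‖ := norm_add_le _ _
      _ = ‖vstar - v‖ + ‖vpi - v‖ := by rw [h4]
  have hd : (2 / (1 - γ)) * ‖L v - v‖ = ‖L v - v‖ / (1 - γ) + ‖L v - v‖ / (1 - γ) := by
    field_simp
    ring
  linarith
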